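/- Let b > 0, β ∈ ℝ, let κ : ℝ → ℝ be a continuous 2πb-periodic function, let l ≥ 1 be an integer, and let f : ℝ → ℝ be a C² 2πb-periodic function. Set φ(x,y) = f(x)·sin(l·y). Then ∫₀^{2πb} ∫₀^{2π} (Q̃φ)(x,y)·φ(x,y) dy dx = π·∫₀^{2πb} ( l⁴/4 − (κ(x)²/8 + 1/2 − β/2)·l² )·f(x)² dx + (π·l²/2)·∫₀^{2πb} f'(x)² dx. -/

import Mathlib

open Real intervalIntegral

lemma sinl_hasDeriv (c y : ℝ) :
    HasDerivAt (fun y => Real.sin (c * y)) (c * Real.cos (c * y)) y := by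
  exact ((Real.hasDerivAt_sin (c * y)).comp y ((hasDerivAt_id y).const_mul c)).congr_deriv (by ring)

lemma cosl_hasDeriv (c y : ℝ) :
    HasDerivAt (fun y => Real.cos (c * y)) (-(c * Real.sin (c * y))) y := by
  have := (Real.hasDerivAt_cos (c * y)).comp y ((hasDerivAt_id y).const_mul c)
  exact this.congr_deriv (by ring)

lemma d_asin (a c : ℝ) :
    deriv (fun y => a * Real.sin (c * y)) = fun y => a * c * Real.cos (c * y) := by
  funext y
  have := ((sinl_hasDeriv c y).const_mul a).deriv
  rw [this]; ring

lemma d_acos (a c : ℝ) :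
    deriv (fun y => a * Real.cos (c * y)) = fun y => -(a * c) * Real.sin (c * y) := by
  funext y
  have := ((cosl_hasDeriv c y).const_mul a).deriv
  rw [this]; ring

lemma d2_asin (a c : ℝ) :
    deriv (deriv (fun y => a * Real.sin (c * y)))
      = fun y => -(a * c ^ 2) * Real.sin (c * y) := by
  rw [d_asin, d_acos]; funext y; ring

lemma d4_asin (a c : ℝ) :
    deriv (deriv (deriv (deriv (fun y => a * Real.sin (c * y)))))
      = fun y => a * c ^ 4 * Real.sin (c * y) := by
  rw [d_asin, d_acos, d_asin, d_acos]; funext y; ring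

lemma sin_sq_integral (l : ℤ) (hl : 1 ≤ l) :
    ∫ y in (0:ℝ)..(2 * π), Real.sin ((l:ℝ) * y) ^ 2 = π := by
  have hl0 : (l : ℝ) ≠ 0 := by exact_mod_cast (by omega : l ≠ 0)
  have hF : ∀ y : ℝ, HasDerivAt (fun y => y / 2 - Real.sin (2 * (l:ℝ) * y) / (4 * l))
      (Real.sin ((l:ℝ) * y) ^ 2) y := by
    intro y
    have h1 : HasDerivAt (fun y : ℝ => y / 2) (1 / 2) y := by
      simpa using (hasDerivAt_id y).div_const 2
    have h2 := (sinl_hasDeriv (2 * (l:ℝ)) y).div_const (4 * l)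
    have := h1.sub h2
    refine this.congr_deriv ?_
    rw [Real.sin_sq_eq_half_sub]
    field_simp
    ring_nf
  have hint : IntervalIntegrable (fun y => Real.sin ((l:ℝ) * y) ^ 2)
      MeasureTheory.volume 0 (2 * π) := by
    apply Continuous.intervalIntegrable; continuity
  have := intervalIntegral.integral_eq_sub_of_hasDerivAt (fun y _ => hF y) hint
  rw [this]
  have hs : Real.sin (2 * (l:ℝ) * (2 * π)) = 0 := by
    have := Real.sin_int_mul_pi (4 * l)
    have he : ((4 * l : ℤ) : ℝ) * π = 2 * (l:ℝ) * (2 * π) := by push_cast; ring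
    rwa [he] at this
  simp [hs]

theorem quadratic_form_on_fourier_mode
    (b : ℝ) (hb : 0 < b) (β : ℝ)
    (κ : ℝ → ℝ) (hκcont : Continuous κ) (hκper : Function.Periodic κ (2 * π * b))
    (l : ℤ) (hl : 1 ≤ l)
    (f : ℝ → ℝ) (hf : ContDiff ℝ 2 f) (hfper : Function.Periodic f (2 * π * b))
    (φ : ℝ → ℝ → ℝ) (hφ : ∀ x y, φ x y = f x * Real.sin (l * y)) :
    (∫ x in (0:ℝ)..(2 * π * b), ∫ y in (0:ℝ)..(2 * π),
        (((κ x) ^ 2 / 8 + 1 / 2 - β / 2) * deriv (deriv (φ x)) y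
          + (1 / 4) * deriv (deriv (deriv (deriv (φ x)))) y
          + (1 / 2) * deriv (deriv (fun x' => deriv (deriv (φ x')) y)) x) * φ x y)
    = π * (∫ x in (0:ℝ)..(2 * π * b),
        ((l : ℝ) ^ 4 / 4 - ((κ x) ^ 2 / 8 + 1 / 2 - β / 2) * (l : ℝ) ^ 2) * (f x) ^ 2)
      + (π * (l : ℝ) ^ 2 / 2) * ∫ x in (0:ℝ)..(2 * π * b), (deriv f x) ^ 2 := by
  set L := 2 * π * b with hL
  set c : ℝ → ℝ := fun x => (κ x) ^ 2 / 8 + 1 / 2 - β / 2 with hc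
  -- basic regularity
  have hfd : Differentiable ℝ f := hf.differentiable (by norm_num)
  have hf1 : ContDiff ℝ 1 (deriv f) := by
    have := (contDiff_succ_iff_deriv (n := 1)).mp (by exact_mod_cast hf)
    exact this.2.2
  have hf'd : Differentiable ℝ (deriv f) := hf1.differentiable (by norm_num)
  have hf''c : Continuous (deriv (deriv f)) := by
    have := (contDiff_one_iff_deriv).mp hf1
    exact this.2
  have hf'c : Continuous (deriv f) := hf'd.continuous
  have hfc : Continuous f := hfd.continuous
  -- function form of φ
  have hφx : ∀ x, φ x = fun y => f x * Real.sin ((l:ℝ) * y) := fun x => funext (hφ x)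
  have h2 : ∀ x, deriv (deriv (φ x)) = fun y => -(f x * (l:ℝ) ^ 2) * Real.sin ((l:ℝ) * y) := by
    intro x; rw [hφx x, d2_asin]
  have h4 : ∀ x, deriv (deriv (deriv (deriv (φ x))))
      = fun y => f x * (l:ℝ) ^ 4 * Real.sin ((l:ℝ) * y) := by
    intro x; rw [hφx x, d4_asin]
  -- x-derivative term
  have hx : ∀ x y, deriv (deriv (fun x' => deriv (deriv (φ x')) y)) x
      = -((l:ℝ) ^ 2 * Real.sin ((l:ℝ) * y)) * deriv (deriv f) x := by
    intro x y
    have he : (fun x' => deriv (deriv (φ x')) y)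
        = fun x' => -((l:ℝ) ^ 2 * Real.sin ((l:ℝ) * y)) * f x' := by
      funext x'; rw [h2 x']; ring
    rw [he]
    have hd1 : deriv (fun x' => -((l:ℝ) ^ 2 * Real.sin ((l:ℝ) * y)) * f x')
        = fun x' => -((l:ℝ) ^ 2 * Real.sin ((l:ℝ) * y)) * deriv f x' := by
      funext x'; exact deriv_const_mul_field _
    rw [hd1]
    exact deriv_const_mul_field _
  -- inner integral
  have hinner : ∀ x, (∫ y in (0:ℝ)..(2 * π),
      (c x * deriv (deriv (φ x)) y
        + (1 / 4) * deriv (deriv (deriv (deriv (φ x)))) y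
        + (1 / 2) * deriv (deriv (fun x' => deriv (deriv (φ x')) y)) x) * φ x y)
      = π * (((l:ℝ) ^ 4 / 4 - c x * (l:ℝ) ^ 2) * f x ^ 2)
        - π * (l:ℝ) ^ 2 / 2 * (deriv (deriv f) x * f x) := by
    intro x
    have hfun : (fun y => (c x * deriv (deriv (φ x)) y
        + (1 / 4) * deriv (deriv (deriv (deriv (φ x)))) y
        + (1 / 2) * deriv (deriv (fun x' => deriv (deriv (φ x')) y)) x) * φ x y)
        = fun y => ((((l:ℝ) ^ 4 / 4 - c x * (l:ℝ) ^ 2) * f x ^ 2)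
            - (l:ℝ) ^ 2 / 2 * (deriv (deriv f) x * f x)) * Real.sin ((l:ℝ) * y) ^ 2 := by
      funext y
      rw [h4 x, h2 x, hx x y, hφ x y]
      push_cast
      ring
    rw [intervalIntegral.integral_congr (fun y _ => congrFun hfun y)]
    rw [intervalIntegral.integral_const_mul, sin_sq_integral l hl]
    ring
  -- rewrite outer integral
  have houter : (∫ x in (0:ℝ)..L, ∫ y in (0:ℝ)..(2 * π),
      (c x * deriv (deriv (φ x)) y
        + (1 / 4) * deriv (deriv (deriv (deriv (φ x)))) y
        + (1 / 2) * deriv (deriv (fun x' => deriv (deriv (φ x')) y)) x) * φ x y)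
      = ∫ x in (0:ℝ)..L, (π * (((l:ℝ) ^ 4 / 4 - c x * (l:ℝ) ^ 2) * f x ^ 2)
          - π * (l:ℝ) ^ 2 / 2 * (deriv (deriv f) x * f x)) :=
    intervalIntegral.integral_congr (fun x _ => hinner x)
  rw [houter]
  -- integrability
  have hi1 : IntervalIntegrable (fun x => π * (((l:ℝ) ^ 4 / 4 - c x * (l:ℝ) ^ 2) * f x ^ 2))
      MeasureTheory.volume 0 L := by
    apply Continuous.intervalIntegrable
    fun_prop
  have hi2 : IntervalIntegrable (fun x => π * (l:ℝ) ^ 2 / 2 * (deriv (deriv f) x * f x))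
      MeasureTheory.volume 0 L := by
    apply Continuous.intervalIntegrable
    fun_prop
  rw [intervalIntegral.integral_sub hi1 hi2,
    intervalIntegral.integral_const_mul, intervalIntegral.integral_const_mul]
  -- integration by parts
  have hf'L : deriv f L = deriv f 0 := by
    have hinner : HasDerivAt (fun x : ℝ => x - L) 1 L := by
      simpa using (hasDerivAt_id L).sub_const L
    have houter : HasDerivAt f (deriv f 0) ((fun x : ℝ => x - L) L) := by
      simpa using (hfd (L - L)).hasDerivAt
    have hshift : HasDerivAt (f ∘ fun x : ℝ => x - L) (deriv f 0 * 1) L :=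
      HasDerivAt.comp (h := fun x : ℝ => x - L) L houter hinner
    have hshift' : HasDerivAt (fun x => f (x - L)) (deriv f 0 * 1) L := hshift
    have heq : (fun x => f (x - L)) = f := by
      funext x
      simpa using (hfper (x - L)).symm
    rw [heq] at hshift'
    simpa using hshift'.deriv
  have hIBP : ∫ x in (0:ℝ)..L, f x * deriv (deriv f) x
      = - ∫ x in (0:ℝ)..L, deriv f x * deriv f x := by
    have hu : ∀ x ∈ Set.uIcc (0:ℝ) L, HasDerivAt f (deriv f x) x :=
      fun x _ => (hfd x).hasDerivAt
    have hv : ∀ x ∈ Set.uIcc (0:ℝ) L, HasDerivAt (deriv f) (deriv (deriv f) x) x :=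
      fun x _ => (hf'd x).hasDerivAt
    have hiu : IntervalIntegrable (deriv f) MeasureTheory.volume 0 L :=
      hf'c.intervalIntegrable _ _
    have hiv : IntervalIntegrable (deriv (deriv f)) MeasureTheory.volume 0 L :=
      hf''c.intervalIntegrable _ _
    have hkey := intervalIntegral.integral_mul_deriv_eq_deriv_mul hu hv hiu hiv
    have hfL : f L = f 0 := by simpa using hfper 0
    rw [hkey, hfL, hf'L]
    ring
  have hmc : ∫ x in (0:ℝ)..L, deriv (deriv f) x * f x
      = ∫ x in (0:ℝ)..L, f x * deriv (deriv f) x :=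
    intervalIntegral.integral_congr (fun x _ => mul_comm _ _)
  have hsq : ∫ x in (0:ℝ)..L, deriv f x * deriv f x
      = ∫ x in (0:ℝ)..L, (deriv f x) ^ 2 :=
    intervalIntegral.integral_congr (fun x _ => (sq (deriv f x)).symm)
  rw [hmc, hIBP, hsq]
  simp only [hc]
  ring
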